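/- Let σ₁, σ₂, σ₃ be nonzero real constants and σ = exp(2σ₁x₁ + 2σ₂x₂ + 2σ₃x₃). Then u(x₁,x₂) = x₁/(2σ₁) − x₂/(2σ₂) + (1/(4σ₁²))e^{−2σ₁x₁} − (1/(4σ₂²))e^{−2σ₂x₂} satisfies div(σ grad u) = 0 on ℝ³, and −σ·grad u = (−(1/σ₁)e^{σ₁x₁+2σ₂x₂+2σ₃x₃} sinh(σ₁x₁), (1/σ₂)e^{2σ₁x₁+σ₂x₂+2σ₃x₃} sinh(σ₂x₂), 0). -/

import Mathlib

noncomputable def pd1 (f : ℝ → ℝ → ℝ → ℝ) (x₁ x₂ x₃ : ℝ) : ℝ := deriv (fun t => f t x₂ x₃) x₁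
noncomputable def pd2 (f : ℝ → ℝ → ℝ → ℝ) (x₁ x₂ x₃ : ℝ) : ℝ := deriv (fun t => f x₁ t x₃) x₂
noncomputable def pd3 (f : ℝ → ℝ → ℝ → ℝ) (x₁ x₂ x₃ : ℝ) : ℝ := deriv (fun t => f x₁ x₂ t) x₃

lemma aux_L1 (c : ℝ) (hc : c ≠ 0) (k l a : ℝ) :
    HasDerivAt (fun t : ℝ => t / (2 * c) - k + 1 / (4 * c ^ 2) * Real.exp (-2 * c * t) - l)
      (1 / (2 * c) - 1 / (2 * c) * Real.exp (-2 * c * a)) a := by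
  have h2 : HasDerivAt (fun t : ℝ => Real.exp (-2 * c * t))
      (Real.exp (-2 * c * a) * (-2 * c * 1)) a := ((hasDerivAt_id a).const_mul (-2 * c)).exp
  have h := (((hasDerivAt_id a).div_const (2 * c)).sub_const k).add
      (h2.const_mul (1 / (4 * c ^ 2))) |>.sub_const l
  refine h.congr_deriv ?_
  field_simp
  ring

lemma aux_L2 (c : ℝ) (hc : c ≠ 0) (k l a : ℝ) :
    HasDerivAt (fun t : ℝ => k - t / (2 * c) + l - 1 / (4 * c ^ 2) * Real.exp (-2 * c * t))
      (1 / (2 * c) * Real.exp (-2 * c * a) - 1 / (2 * c)) a := by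
  have h2 : HasDerivAt (fun t : ℝ => Real.exp (-2 * c * t))
      (Real.exp (-2 * c * a) * (-2 * c * 1)) a := ((hasDerivAt_id a).const_mul (-2 * c)).exp
  have h := ((((hasDerivAt_id a).div_const (2 * c)).const_sub k).add_const l).sub
      (h2.const_mul (1 / (4 * c ^ 2)))
  refine h.congr_deriv ?_
  field_simp
  ring

lemma aux_L3 (c : ℝ) (hc : c ≠ 0) (d₂ d₃ a : ℝ) :
    HasDerivAt (fun t : ℝ => Real.exp (2 * c * t + d₂ + d₃) *
        (1 / (2 * c) - 1 / (2 * c) * Real.exp (-2 * c * t)))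
      (Real.exp (2 * c * a + d₂ + d₃)) a := by
  have h1 : HasDerivAt (fun t : ℝ => Real.exp (2 * c * t + d₂ + d₃))
      (Real.exp (2 * c * a + d₂ + d₃) * (2 * c * 1)) a :=
    ((((hasDerivAt_id a).const_mul (2 * c)).add_const d₂).add_const d₃).exp
  have h2 : HasDerivAt (fun t : ℝ => Real.exp (-2 * c * t))
      (Real.exp (-2 * c * a) * (-2 * c * 1)) a := ((hasDerivAt_id a).const_mul (-2 * c)).exp
  have h := h1.mul ((h2.const_mul (1 / (2 * c))).const_sub (1 / (2 * c)))
  refine h.congr_deriv ?_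
  field_simp
  ring

lemma aux_L4 (c : ℝ) (hc : c ≠ 0) (d₁ d₃ a : ℝ) :
    HasDerivAt (fun t : ℝ => Real.exp (d₁ + 2 * c * t + d₃) *
        (1 / (2 * c) * Real.exp (-2 * c * t) - 1 / (2 * c)))
      (-Real.exp (d₁ + 2 * c * a + d₃)) a := by
  have h1 : HasDerivAt (fun t : ℝ => Real.exp (d₁ + 2 * c * t + d₃))
      (Real.exp (d₁ + 2 * c * a + d₃) * (2 * c * 1)) a :=
    ((((hasDerivAt_id a).const_mul (2 * c)).const_add d₁).add_const d₃).exp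
  have h2 : HasDerivAt (fun t : ℝ => Real.exp (-2 * c * t))
      (Real.exp (-2 * c * a) * (-2 * c * 1)) a := ((hasDerivAt_id a).const_mul (-2 * c)).exp
  have h := h1.mul ((h2.const_mul (1 / (2 * c))).sub_const (1 / (2 * c)))
  refine h.congr_deriv ?_
  field_simp
  ring

/-- The potential `u⁽¹⁾(i,0)` solves `div(σ grad u) = 0` for
`σ = e^{2σ₁x₁+2σ₂x₂+2σ₃x₃}`, and its current density `−σ grad u` is
`(−(1/σ₁)e^{σ₁x₁+2σ₂x₂+2σ₃x₃} sinh(σ₁x₁), (1/σ₂)e^{2σ₁x₁+σ₂x₂+2σ₃x₃} sinh(σ₂x₂), 0)`. -/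
theorem potential_degree_one_coefficient_i
    (σ₁ σ₂ σ₃ : ℝ) (hσ₁ : σ₁ ≠ 0) (hσ₂ : σ₂ ≠ 0) (hσ₃ : σ₃ ≠ 0)
    (σ u : ℝ → ℝ → ℝ → ℝ)
    (hσ : σ = fun x₁ x₂ x₃ => Real.exp (2 * σ₁ * x₁ + 2 * σ₂ * x₂ + 2 * σ₃ * x₃))
    (hu : u = fun x₁ x₂ _ => x₁ / (2 * σ₁) - x₂ / (2 * σ₂)
      + 1 / (4 * σ₁ ^ 2) * Real.exp (-2 * σ₁ * x₁)
      - 1 / (4 * σ₂ ^ 2) * Real.exp (-2 * σ₂ * x₂)) :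
    ∀ x₁ x₂ x₃,
      pd1 (fun a b c => σ a b c * pd1 u a b c) x₁ x₂ x₃
        + pd2 (fun a b c => σ a b c * pd2 u a b c) x₁ x₂ x₃
        + pd3 (fun a b c => σ a b c * pd3 u a b c) x₁ x₂ x₃ = 0 ∧
      -(σ x₁ x₂ x₃ * pd1 u x₁ x₂ x₃)
        = -(1 / σ₁) * Real.exp (σ₁ * x₁ + 2 * σ₂ * x₂ + 2 * σ₃ * x₃) * Real.sinh (σ₁ * x₁) ∧
      -(σ x₁ x₂ x₃ * pd2 u x₁ x₂ x₃)
        = 1 / σ₂ * Real.exp (2 * σ₁ * x₁ + σ₂ * x₂ + 2 * σ₃ * x₃) * Real.sinh (σ₂ * x₂) ∧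
      -(σ x₁ x₂ x₃ * pd3 u x₁ x₂ x₃) = 0 := by
  subst hσ hu
  intro x₁ x₂ x₃
  have d1 : ∀ a : ℝ, deriv (fun t : ℝ => t / (2 * σ₁) - x₂ / (2 * σ₂)
      + 1 / (4 * σ₁ ^ 2) * Real.exp (-2 * σ₁ * t)
      - 1 / (4 * σ₂ ^ 2) * Real.exp (-2 * σ₂ * x₂)) a
      = 1 / (2 * σ₁) - 1 / (2 * σ₁) * Real.exp (-2 * σ₁ * a) :=
    fun a => (aux_L1 σ₁ hσ₁ _ _ a).deriv
  have d2 : ∀ b : ℝ, deriv (fun t : ℝ => x₁ / (2 * σ₁) - t / (2 * σ₂)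
      + 1 / (4 * σ₁ ^ 2) * Real.exp (-2 * σ₁ * x₁)
      - 1 / (4 * σ₂ ^ 2) * Real.exp (-2 * σ₂ * t)) b
      = 1 / (2 * σ₂) * Real.exp (-2 * σ₂ * b) - 1 / (2 * σ₂) :=
    fun b => (aux_L2 σ₂ hσ₂ _ _ b).deriv
  refine ⟨?_, ?_, ?_, ?_⟩
  · simp only [pd1, pd2, pd3]
    simp only [d1, d2, deriv_const', mul_zero, deriv_const]
    rw [(aux_L3 σ₁ hσ₁ (2 * σ₂ * x₂) (2 * σ₃ * x₃) x₁).deriv,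
        (aux_L4 σ₂ hσ₂ (2 * σ₁ * x₁) (2 * σ₃ * x₃) x₂).deriv]
    ring
  · simp only [pd1, d1, Real.sinh_eq]
    have h1 : Real.exp (σ₁ * x₁ + 2 * σ₂ * x₂ + 2 * σ₃ * x₃) * Real.exp (σ₁ * x₁)
        = Real.exp (2 * σ₁ * x₁ + 2 * σ₂ * x₂ + 2 * σ₃ * x₃) := by
      rw [← Real.exp_add]; congr 1; ring
    have h2 : Real.exp (σ₁ * x₁ + 2 * σ₂ * x₂ + 2 * σ₃ * x₃) * Real.exp (-(σ₁ * x₁))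
        = Real.exp (2 * σ₁ * x₁ + 2 * σ₂ * x₂ + 2 * σ₃ * x₃) * Real.exp (-2 * σ₁ * x₁) := by
      rw [← Real.exp_add, ← Real.exp_add]; congr 1; ring
    linear_combination (1 / (2 * σ₁)) * h1 - (1 / (2 * σ₁)) * h2
  · simp only [pd2, d2, Real.sinh_eq]
    have h1 : Real.exp (2 * σ₁ * x₁ + σ₂ * x₂ + 2 * σ₃ * x₃) * Real.exp (σ₂ * x₂)
        = Real.exp (2 * σ₁ * x₁ + 2 * σ₂ * x₂ + 2 * σ₃ * x₃) := by
      rw [← Real.exp_add]; congr 1; ring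
    have h2 : Real.exp (2 * σ₁ * x₁ + σ₂ * x₂ + 2 * σ₃ * x₃) * Real.exp (-(σ₂ * x₂))
        = Real.exp (2 * σ₁ * x₁ + 2 * σ₂ * x₂ + 2 * σ₃ * x₃) * Real.exp (-2 * σ₂ * x₂) := by
      rw [← Real.exp_add, ← Real.exp_add]; congr 1; ring
    linear_combination (1 / (2 * σ₂)) * h2 - (1 / (2 * σ₂)) * h1
  · simp [pd3]
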